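/- Let n ≥ 2 and let k satisfy F(n) ≤ k < F(n+1). For 0 ≤ j ≤ k define length-k words z_j from the infinite Fibonacci word f_∞ by: z_j = f_∞[j .. j+k) for 0 ≤ j ≤ F(n)−1, and z_j = f_∞[j+F(n+1)−k−1 .. j+F(n+1)−1) for F(n) ≤ j ≤ k. Then z_0, z_1, …, z_k are pairwise distinct, every length-k factor of f_∞ equals z_j for some 0 ≤ j ≤ k, and the position of the first occurrence of z_j in f_∞ is strictly increasing in j (the z_j are listed in the order of their first occurrences). -/

import Mathlib

/-- Fibonacci numbers: F(0)=1, F(1)=1, F(n+2)=F(n+1)+F(n). -/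
def F : ℕ → ℕ
  | 0 => 1
  | 1 => 1
  | n + 2 => F (n + 1) + F n

/-- Finite Fibonacci words over {a,b} coded as Fin 2 (a=0, b=1). -/
def fibWord : ℕ → List (Fin 2)
  | 0 => [0]
  | 1 => [1]
  | n + 2 => fibWord (n + 1) ++ fibWord n

/-- The infinite Fibonacci word f_∞ : ℕ → Fin 2 (each f_n is a prefix of f_{n+1}, and
F(i+2) > i, so the i-th letter of f_∞ is the i-th letter of f_{i+2}). -/
def fibInf (i : ℕ) : Fin 2 := (fibWord (i + 2)).getD i 0

/-- The length-k factor of f_∞ starting at position s, i.e. f_∞[s .. s+k). -/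
def fibFactor (s k : ℕ) : Fin k → Fin 2 := fun t => fibInf (s + t.val)

/-- The words z_0, …, z_k of Theorem (Chuan–Ho): z_j = f_∞[j .. j+k) for 0 ≤ j ≤ F(n)−1,
and z_j = f_∞[j+F(n+1)−k−1 .. j+F(n+1)−1) for F(n) ≤ j ≤ k. -/
def zword (n k j : ℕ) : Fin k → Fin 2 :=
  if j < F n then fibFactor j k else fibFactor (j + F (n + 1) - k - 1) k

set_option maxHeartbeats 1000000

section aux

/-- two-step induction -/
lemma two_step {P : ℕ → Prop} (h0 : P 0) (h1 : P 1)
    (h : ∀ n, P n → P (n + 1) → P (n + 2)) : ∀ n, P n := by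
  have key : ∀ n, P n ∧ P (n + 1) := by
    intro n
    induction n with
    | zero => exact ⟨h0, h1⟩
    | succ m ih => exact ⟨ih.2, h m ih.1 ih.2⟩
  exact fun n => (key n).1

lemma F_pos : ∀ m, 0 < F m := by
  apply two_step
  · decide
  · decide
  · intro n h1 h2; show 0 < F (n+1) + F n; omega

lemma F_le_succ (m : ℕ) : F m ≤ F (m + 1) := by
  cases m with
  | zero => decide
  | succ l => show F (l+1) ≤ F (l+1) + F l; omega

lemma F_mono : Monotone F := monotone_nat_of_le_succ F_le_succ

lemma F_ge_self : ∀ m, m ≤ F m := by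
  apply two_step
  · decide
  · decide
  · intro n h1 h2
    have := F_pos n
    show n + 2 ≤ F (n+1) + F n; omega

lemma fibWord_length : ∀ m, (fibWord m).length = F m := by
  apply two_step
  · decide
  · decide
  · intro n h1 h2
    show (fibWord (n+1) ++ fibWord n).length = F (n+1) + F n
    simp [h1, h2]

lemma fibWord_prefix : ∀ a b, 1 ≤ a → a ≤ b → fibWord a <+: fibWord b := by
  intro a b ha hab
  induction b with
  | zero => omega
  | succ c ih =>
    rcases Nat.lt_or_ge a (c+1) with h | h
    · have hc : 1 ≤ c := by omega
      refine (ih (by omega)).trans ?_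
      obtain ⟨c', rfl⟩ : ∃ c', c = c' + 1 := ⟨c - 1, by omega⟩
      exact List.prefix_append _ _
    · have : a = c + 1 := by omega
      subst this; exact List.prefix_refl _

lemma getD_prefix {l₁ l₂ : List (Fin 2)} (h : l₁ <+: l₂) {i : ℕ} (hi : i < l₁.length)
    (d : Fin 2) : l₁.getD i d = l₂.getD i d := by
  rw [List.getD_eq_getElem _ _ hi, List.getD_eq_getElem _ _ (hi.trans_le h.length_le)]
  exact h.getElem hi

lemma fibInf_eq (m : ℕ) (hm : 1 ≤ m) {i : ℕ} (hi : i < F m) :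
    (fibWord m).getD i 0 = fibInf i := by
  have hiF : i < F (i + 2) := lt_of_lt_of_le (by omega) (F_ge_self (i+2))
  rcases Nat.le_total m (i + 2) with h | h
  · rw [fibInf, ← getD_prefix (fibWord_prefix m (i+2) hm h) (by rw [fibWord_length]; exact hi)]
  · rw [fibInf, getD_prefix (fibWord_prefix (i+2) m (by omega) h) (by rw [fibWord_length]; exact hiF)]

/-- near-commutation: f_{m+1} f_m and f_m f_{m+1} agree on the first F(m+2)-2 letters -/
lemma fib_near_comm : ∀ m, 1 ≤ m →
    (fibWord (m+1) ++ fibWord m).take (F (m+2) - 2) =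
    (fibWord m ++ fibWord (m+1)).take (F (m+2) - 2) := by
  intro m
  induction m with
  | zero => omega
  | succ c ih =>
    intro _
    rcases Nat.eq_zero_or_pos c with rfl | hc
    · decide
    have hgoal : F (c+3) - 2 = (fibWord (c+1)).length + (F (c+2) - 2) := by
      rw [fibWord_length]
      have h2 : 2 ≤ F (c+2) := le_trans (by decide : 2 ≤ F 2) (F_mono (by omega))
      show F (c+2) + F (c+1) - 2 = F (c+1) + (F (c+2) - 2)
      omega
    have e1 : fibWord (c+2) ++ fibWord (c+1) = fibWord (c+1) ++ (fibWord c ++ fibWord (c+1)) := by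
      show (fibWord (c+1) ++ fibWord c) ++ fibWord (c+1) = _
      rw [List.append_assoc]
    have e2 : fibWord (c+1) ++ fibWord (c+2) = fibWord (c+1) ++ (fibWord (c+1) ++ fibWord c) := rfl
    rw [e1, e2, hgoal, List.take_length_add_append, List.take_length_add_append, (ih hc).symm]

/-- periodicity: f_∞ has period F(m) on its prefix of length F(m+2)-2 -/
lemma fibPeriod (m : ℕ) (hm : 1 ≤ m) {i : ℕ} (h : i + F m + 3 ≤ F (m + 2)) :
    fibInf (i + F m) = fibInf i := by
  have hFm1 : i < F (m + 1) := by
    have : F (m+2) = F (m+1) + F m := rfl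
    omega
  have hp : i + F m < F (m + 2) := by omega
  rw [← fibInf_eq (m+2) (by omega) hp, ← fibInf_eq (m+1) (by omega) hFm1]
  have hW : fibWord (m+2) = fibWord (m+1) ++ fibWord m := rfl
  have hlen1 : (fibWord (m+1)).length = F (m+1) := fibWord_length _
  have hlenm : (fibWord m).length = F m := fibWord_length _
  -- getD from the take
  have take_getD : ∀ (l : List (Fin 2)) (n j : ℕ), j < n →
      (l.take n).getD j 0 = l.getD j 0 := by
    intro l n j hj
    rw [List.getD_eq_getElem?_getD, List.getD_eq_getElem?_getD, List.getElem?_take, if_pos hj]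
  have h1 : (fibWord (m+2)).getD (i + F m) 0
      = ((fibWord (m+1) ++ fibWord m).take (F (m+2) - 2)).getD (i + F m) 0 := by
    rw [take_getD _ _ _ (by omega), hW]
  rw [h1, fib_near_comm m hm, take_getD _ _ _ (by omega),
    List.getD_append_right _ _ _ _ (by rw [hlenm]; omega)]
  rw [hlenm, Nat.add_sub_cancel]
section chunk2

def no00 (l : List (Fin 2)) : Prop := ∀ i, ¬(l.getD i 1 = 0 ∧ l.getD (i+1) 1 = 0)
def no111 (l : List (Fin 2)) : Prop :=
  ∀ i, ¬(l.getD i 0 = 1 ∧ l.getD (i+1) 0 = 1 ∧ l.getD (i+2) 0 = 1)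

def goodWord (l : List (Fin 2)) : Prop :=
  no00 l ∧ no111 l ∧ l.getD 0 1 = 1 ∧ l.getD 1 0 = 0 ∧
  ¬(l.getD (l.length - 2) 0 = 1 ∧ l.getD (l.length - 1) 0 = 1)

lemma getD_irrel {l : List (Fin 2)} {i : ℕ} (h : i < l.length) (d d' : Fin 2) :
    l.getD i d = l.getD i d' := by
  rw [List.getD_eq_getElem _ _ h, List.getD_eq_getElem _ _ h]

lemma goodWord_append {l₁ l₂ : List (Fin 2)} (h1 : goodWord l₁) (h2 : goodWord l₂)
    (hl1 : 2 ≤ l₁.length) (hl2 : 2 ≤ l₂.length) : goodWord (l₁ ++ l₂) := by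
  obtain ⟨n1, n1', hd1, sd1, lt1⟩ := h1
  obtain ⟨n2, n2', hd2, sd2, lt2⟩ := h2
  refine ⟨?_, ?_, ?_, ?_, ?_⟩
  · -- no00
    intro i ⟨ha, hb⟩
    rcases Nat.lt_or_ge (i+1) l₁.length with h | h
    · exact n1 i ⟨by rwa [List.getD_append _ _ _ _ (by omega)] at ha,
        by rwa [List.getD_append _ _ _ _ h] at hb⟩
    rcases Nat.lt_or_ge i l₁.length with h' | h'
    · -- i+1 = l₁.length : second letter is head of l₂ = 1
      have : i + 1 = l₁.length := by omega
      rw [List.getD_append_right _ _ _ _ (by omega), this, Nat.sub_self, hd2] at hb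
      exact absurd hb (by decide)
    · rw [List.getD_append_right _ _ _ _ h'] at ha
      rw [List.getD_append_right _ _ _ _ (by omega)] at hb
      have : i + 1 - l₁.length = (i - l₁.length) + 1 := by omega
      rw [this] at hb
      exact n2 _ ⟨ha, hb⟩
  · -- no111
    intro i ⟨ha, hb, hc⟩
    rcases Nat.lt_or_ge (i+2) l₁.length with h | h
    · exact n1' i ⟨by rwa [List.getD_append _ _ _ _ (by omega)] at ha,
        by rwa [List.getD_append _ _ _ _ (by omega)] at hb,
        by rwa [List.getD_append _ _ _ _ h] at hc⟩
    rcases Nat.lt_or_ge i l₁.length with h' | h'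
    · rcases Nat.lt_or_ge (i+1) l₁.length with h'' | h''
      · -- i+2 = l₁.length: last two of l₁ both 1, contradiction
        have e2 : i + 2 = l₁.length := by omega
        apply lt1
        constructor
        · rw [List.getD_append _ _ _ _ h'] at ha
          rwa [show l₁.length - 2 = i by omega]
        · rw [List.getD_append _ _ _ _ h''] at hb
          rwa [show l₁.length - 1 = i + 1 by omega]
      · -- i+1 = l₁.length: third letter is l₂[1] = 0
        have e1 : i + 1 = l₁.length := by omega
        rw [List.getD_append_right _ _ _ _ (by omega), show i + 2 - l₁.length = 1 by omega] at hc
        rw [sd2] at hc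
        exact absurd hc (by decide)
    · rw [List.getD_append_right _ _ _ _ h'] at ha
      rw [List.getD_append_right _ _ _ _ (by omega), show i + 1 - l₁.length = (i - l₁.length) + 1 by omega] at hb
      rw [List.getD_append_right _ _ _ _ (by omega), show i + 2 - l₁.length = (i - l₁.length) + 2 by omega] at hc
      exact n2' _ ⟨ha, hb, hc⟩
  · rw [List.getD_append _ _ _ _ (by omega)]; exact hd1
  · rw [List.getD_append _ _ _ _ (by omega)]; exact sd1
  · intro ⟨ha, hb⟩
    apply lt2
    rw [List.length_append] at ha hb
    rw [List.getD_append_right _ _ _ _ (by omega),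
      show l₁.length + l₂.length - 2 - l₁.length = l₂.length - 2 by omega] at ha
    rw [List.getD_append_right _ _ _ _ (by omega),
      show l₁.length + l₂.length - 1 - l₁.length = l₂.length - 1 by omega] at hb
    exact ⟨ha, hb⟩

lemma goodWord_word2 : goodWord [1, 0] := by
  refine ⟨?_, ?_, by decide, by decide, by decide⟩
  · intro i ⟨h1, h2⟩
    rcases Nat.lt_or_ge i 2 with h | h
    · interval_cases i <;> revert h1 h2 <;> decide
    · rw [List.getD_eq_default _ _ (by simp only [List.length_cons, List.length_nil]; omega)] at h1
      exact absurd h1 (by decide)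
  · intro i ⟨h1, h2, h3⟩
    rcases Nat.lt_or_ge i 2 with h | h
    · interval_cases i <;> revert h1 h2 h3 <;> decide
    · rw [List.getD_eq_default _ _ (by simp only [List.length_cons, List.length_nil]; omega)] at h3
      exact absurd h3 (by decide)

lemma goodWord_word3 : goodWord [1, 0, 1] := by
  refine ⟨?_, ?_, by decide, by decide, by decide⟩
  · intro i ⟨h1, h2⟩
    rcases Nat.lt_or_ge i 3 with h | h
    · interval_cases i <;> revert h1 h2 <;> decide
    · rw [List.getD_eq_default _ _ (by simp only [List.length_cons, List.length_nil]; omega)] at h1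
      exact absurd h1 (by decide)
  · intro i ⟨h1, h2, h3⟩
    rcases Nat.lt_or_ge i 3 with h | h
    · interval_cases i <;> revert h1 h2 h3 <;> decide
    · rw [List.getD_eq_default _ _ (by simp only [List.length_cons, List.length_nil]; omega)] at h3
      exact absurd h3 (by decide)

lemma goodWord_fib : ∀ m, 2 ≤ m → goodWord (fibWord m) := by
  have key : ∀ m, goodWord (fibWord (m + 2)) := by
    apply two_step
    · show goodWord [1, 0]; exact goodWord_word2
    · show goodWord [1, 0, 1]; exact goodWord_word3
    · intro c h1 h2
      show goodWord (fibWord (c+3) ++ fibWord (c+2))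
      apply goodWord_append h2 h1
      · rw [fibWord_length]; exact le_trans (by decide : 2 ≤ F 2) (F_mono (by omega))
      · rw [fibWord_length]; exact le_trans (by decide : 2 ≤ F 2) (F_mono (by omega))
  intro m hm
  obtain ⟨c, rfl⟩ : ∃ c, m = c + 2 := ⟨m - 2, by omega⟩
  exact key c

lemma fin2_cases (x : Fin 2) : x = 0 ∨ x = 1 := by
  fin_cases x <;> simp

lemma fibInf_getD (m : ℕ) (hm : 2 ≤ m) {i : ℕ} (hi : i < F m) (d : Fin 2) :
    (fibWord m).getD i d = fibInf i := by
  rw [getD_irrel (by rw [fibWord_length]; exact hi) d 0]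
  exact fibInf_eq m (by omega) hi

lemma no00_inf (i : ℕ) : ¬(fibInf i = 0 ∧ fibInf (i + 1) = 0) := by
  intro ⟨h1, h2⟩
  have hg := goodWord_fib (i + 4) (by omega)
  have hF : i + 2 < F (i + 4) := lt_of_lt_of_le (by omega) (F_ge_self _)
  apply hg.1 i
  rw [fibInf_getD (i+4) (by omega) (by omega), fibInf_getD (i+4) (by omega) (by omega)]
  exact ⟨h1, h2⟩

lemma no111_inf (i : ℕ) : ¬(fibInf i = 1 ∧ fibInf (i + 1) = 1 ∧ fibInf (i + 2) = 1) := by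
  intro ⟨h1, h2, h3⟩
  have hg := goodWord_fib (i + 5) (by omega)
  have hF : i + 3 < F (i + 5) := lt_of_lt_of_le (by omega) (F_ge_self _)
  apply hg.2.1 i
  rw [fibInf_getD (i+5) (by omega) (by omega), fibInf_getD (i+5) (by omega) (by omega),
    fibInf_getD (i+5) (by omega) (by omega)]
  exact ⟨h1, h2, h3⟩

end chunk2
section chunk3

/-- local periodicity predicate -/
def Pd (a L R : ℕ) : Prop := ∀ i, L ≤ i → i + a + 3 ≤ R → fibInf (i + a) = fibInf i

lemma Pd_mono {a L R L' R' : ℕ} (h : Pd a L R) (hL : L ≤ L') (hR : R' ≤ R) : Pd a L' R' :=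
  fun i hi hiR => h i (hL.trans hi) (hiR.trans hR)

lemma Pd_sub {a b L R : ℕ} (ha : Pd a L R) (hb : Pd b L R) (hba : b ≤ a) :
    Pd (a - b) L (R - b) := by
  intro i hi hiR
  have h1 : fibInf (i + a) = fibInf i := ha i hi (by omega)
  have h2 : fibInf ((i + (a - b)) + b) = fibInf (i + (a - b)) := hb (i + (a - b)) (by omega) (by omega)
  rw [show i + (a - b) + b = i + a by omega] at h2
  rw [← h2, h1]

lemma Pd_gcd : ∀ (c a b L R : ℕ), a + b ≤ c → Pd a L R → Pd b L R →
    Pd (Nat.gcd a b) L (R - (a + b)) := by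
  intro c
  induction c with
  | zero =>
    intro a b L R hc ha hb
    obtain ⟨rfl, rfl⟩ : a = 0 ∧ b = 0 := by omega
    simpa using Pd_mono hb le_rfl (by omega)
  | succ c ih =>
    intro a b L R hc ha hb
    rcases Nat.eq_zero_or_pos a with rfl | hA
    · rw [Nat.gcd_zero_left]; exact Pd_mono hb le_rfl (by omega)
    rcases Nat.eq_zero_or_pos b with rfl | hB
    · rw [Nat.gcd_zero_right]; exact Pd_mono ha le_rfl (by omega)
    rcases Nat.le_total b a with hba | hab
    · have h1 : Pd (a - b) L (R - b) := Pd_sub ha hb hba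
      have h2 : Pd b L (R - b) := Pd_mono hb le_rfl (by omega)
      have h3 := ih (a - b) b L (R - b) (by omega) h1 h2
      rw [Nat.gcd_sub_self_left hba] at h3
      exact Pd_mono h3 le_rfl (by omega)
    · have h1 : Pd (b - a) L (R - a) := Pd_sub hb ha hab
      have h2 : Pd a L (R - a) := Pd_mono ha le_rfl (by omega)
      have h3 := ih a (b - a) L (R - a) (by omega) h2 h1
      rw [Nat.gcd_comm, Nat.gcd_sub_self_left hab, Nat.gcd_comm] at h3
      exact Pd_mono h3 le_rfl (by omega)

lemma F_coprime : ∀ m, Nat.gcd (F m) (F (m + 1)) = 1 := by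
  intro m
  induction m with
  | zero => decide
  | succ c ih =>
    have : F (c + 2) = F c + F (c + 1) := by show F (c+2) = _; rw [F]; omega
    rw [this, Nat.gcd_add_self_right, Nat.gcd_comm]
    exact ih

lemma fibPd (m : ℕ) (hm : 1 ≤ m) : Pd (F m) 0 (F (m + 2)) := by
  intro i _ hR
  exact fibPeriod m hm (by omega)

/-- the infinite Fibonacci word is not eventually periodic -/
lemma fib_aperiodic (s d : ℕ) (hd : 0 < d)
    (hper : ∀ i, s ≤ i → fibInf (i + d) = fibInf i) : False := by
  -- choose a large scale m
  obtain ⟨m, hm1, hFm1⟩ : ∃ m, 1 ≤ m ∧ s + 3 * d + 20 ≤ F (m + 1) :=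
    ⟨s + 3 * d + 20, by omega, le_trans (by omega) (F_ge_self _)⟩
  have hPdd : ∀ R, Pd d s R := fun R i hi _ => hper i hi
  -- gcd with F m
  have h1 : Pd (Nat.gcd d (F m)) s (F (m + 2) - (d + F m)) :=
    Pd_gcd (d + F m) d (F m) s (F (m+2)) le_rfl (hPdd _) (Pd_mono (fibPd m hm1) (by omega) le_rfl)
  have h2 : Pd (Nat.gcd d (F (m+1))) s (F (m + 3) - (d + F (m+1))) :=
    Pd_gcd (d + F (m+1)) d (F (m+1)) s (F (m+3)) le_rfl (hPdd _)
      (Pd_mono (fibPd (m+1) (by omega)) (by omega) le_rfl)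
  set g1 := Nat.gcd d (F m) with hg1
  set g2 := Nat.gcd d (F (m+1)) with hg2
  have hF2 : F (m + 2) = F (m+1) + F m := by rw [F]
  have hF3 : F (m + 3) = F (m+2) + F (m+1) := by rw [F]
  have hg1d : g1 ≤ d := Nat.le_of_dvd hd (Nat.gcd_dvd_left _ _)
  have hg2d : g2 ≤ d := Nat.le_of_dvd hd (Nat.gcd_dvd_left _ _)
  have hFmono : F m ≤ F (m+1) := F_le_succ m
  -- common region
  have h1' : Pd g1 s (F (m+1) - d) := Pd_mono h1 le_rfl (by omega)
  have h2' : Pd g2 s (F (m+1) - d) := Pd_mono h2 le_rfl (by omega)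
  have h3 : Pd (Nat.gcd g1 g2) s (F (m+1) - d - (g1 + g2)) :=
    Pd_gcd (g1 + g2) g1 g2 s (F (m+1) - d) le_rfl h1' h2'
  have hgg : Nat.gcd g1 g2 = 1 := by
    have hdvd : Nat.gcd g1 g2 ∣ 1 := by
      rw [← F_coprime m]
      exact Nat.dvd_gcd ((Nat.gcd_dvd_left g1 g2).trans (Nat.gcd_dvd_right d (F m)))
        ((Nat.gcd_dvd_right g1 g2).trans (Nat.gcd_dvd_right d (F (m+1))))
    exact Nat.dvd_one.mp hdvd
  rw [hgg] at h3
  -- now fibInf is constant on [s, s+2]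
  have e1 : fibInf (s + 1) = fibInf s := h3 s le_rfl (by omega)
  have e2 : fibInf (s + 1 + 1) = fibInf (s + 1) := h3 (s+1) (by omega) (by omega)
  rcases fin2_cases (fibInf s) with h0 | h0
  · exact no00_inf s ⟨h0, by rw [e1, h0]⟩
  · exact no111_inf s ⟨h0, by rw [e1, h0], by rw [show s + 2 = s + 1 + 1 by omega, e2, e1, h0]⟩

end chunk3
section chunk4

/-- the defining position of z_j -/
def zpos (n k j : ℕ) : ℕ := if j < F n then j else j + F (n + 1) - k - 1

lemma zword_eq_factor (n k j : ℕ) : zword n k j = fibFactor (zpos n k j) k := by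
  rw [zword, zpos]
  split <;> rfl

lemma zpos_strictMono {n k : ℕ} (hk1 : F n ≤ k) (hk2 : k < F (n + 1)) {j j' : ℕ}
    (hjj : j < j') (hj' : j' ≤ k) : zpos n k j < zpos n k j' := by
  rw [zpos, zpos]
  rcases Nat.lt_or_ge j (F n) with h | h
  · rcases Nat.lt_or_ge j' (F n) with h' | h'
    · rw [if_pos h, if_pos h']; exact hjj
    · rw [if_pos h, if_neg (by omega)]; omega
  · rw [if_neg (by omega), if_neg (by omega)]; omega

/-- main representation lemma: every window has a representative z_j whose defining
position is ≤ the window's position. -/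
lemma window_rep (n k : ℕ) (hn : 2 ≤ n) (hk1 : F n ≤ k) (hk2 : k < F (n + 1)) :
    ∀ s, ∃ j ≤ k, zpos n k j ≤ s ∧ fibFactor s k = zword n k j := by
  have hFn : 2 ≤ F n := le_trans (by decide : 2 ≤ F 2) (F_mono hn)
  have hF2 : F (n + 2) = F (n + 1) + F n := by rw [F]
  intro s
  induction s using Nat.strong_induction_on with
  | _ s ih =>
    rcases Nat.lt_or_ge s (F n) with hs | hs
    · -- first region
      exact ⟨s, by omega, by rw [zpos, if_pos hs], by rw [zword, if_pos hs]⟩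
    rcases Nat.lt_or_ge s (F n + (F (n+1) - k - 1)) with hs2 | hs2
    · -- gap region; shift down by F n
      have heq : fibFactor s k = fibFactor (s - F n) k := by
        funext t
        show fibInf (s + t.val) = fibInf (s - F n + t.val)
        have ht : t.val < k := t.isLt
        have := fibPeriod n (by omega) (i := s - F n + t.val) (by omega)
        rw [show s - F n + t.val + F n = s + t.val by omega] at this
        exact this
      obtain ⟨j, hj, hjpos, hjeq⟩ := ih (s - F n) (by omega)
      exact ⟨j, hj, by omega, heq.trans hjeq⟩
    rcases Nat.lt_or_ge s (F (n+1)) with hs3 | hs3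
    · -- third region
      refine ⟨s + k + 1 - F (n+1), by omega, ?_, ?_⟩
      · rw [zpos, if_neg (by omega)]; omega
      · rw [zword, if_neg (by omega),
          show s + k + 1 - F (n+1) + F (n + 1) - k - 1 = s by omega]
    · -- far region: reduce using a suitable Fibonacci period
      have hex : ∃ m, 1 ≤ m ∧ s + k + 2 ≤ F (m + 2) :=
        ⟨s + k, by omega, le_trans (by omega) (F_ge_self _)⟩
      set m := Nat.find hex with hmdef
      obtain ⟨hm1, hm2⟩ : 1 ≤ m ∧ s + k + 2 ≤ F (m + 2) := Nat.find_spec hex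
      have hFms : F m ≤ s := by
        rcases Nat.le_total m (n + 1) with h | h
        · exact le_trans (F_mono h) hs3
        · rcases Nat.eq_or_lt_of_le h with heq | h'
          · rw [← heq]; exact hs3
          · -- m ≥ n + 2, use minimality at m - 1
            have hmin := Nat.find_min hex (m := m - 1) (by omega)
            push_neg at hmin
            have h5 : F (m - 1 + 2) < s + k + 2 := hmin (by omega)
            have hFm1 : F (m + 1) < s + k + 2 := by
              rwa [show m - 1 + 2 = m + 1 by omega] at h5
            have hkF : k ≤ F (m - 1) - 1 := by
              have : F (n + 1) ≤ F (m - 1) := F_mono (by omega)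
              omega
            have hFsum : F (m + 1) = F m + F (m - 1) := by
              rw [show m + 1 = (m - 1) + 2 by omega, F, show m - 1 + 1 = m by omega]
            omega
      have heq : fibFactor s k = fibFactor (s - F m) k := by
        funext t
        show fibInf (s + t.val) = fibInf (s - F m + t.val)
        have ht : t.val < k := t.isLt
        have := fibPeriod m hm1 (i := s - F m + t.val) (by omega)
        rw [show s - F m + t.val + F m = s + t.val by omega] at this
        exact this
      have hFpos := F_pos m
      obtain ⟨j, hj, hjpos, hjeq⟩ := ih (s - F m) (by omega)
      exact ⟨j, hj, by omega, heq.trans hjeq⟩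

end chunk4
section chunk5

/-- the finite set of length-j factors of the infinite Fibonacci word -/
noncomputable def factorSet (j : ℕ) : Finset (Fin j → Fin 2) :=
  Set.Finite.toFinset (Set.toFinite (Set.range (fun s => fibFactor s j)))

lemma mem_factorSet {j : ℕ} (s : ℕ) : fibFactor s j ∈ factorSet j := by
  rw [factorSet, Set.Finite.mem_toFinset]
  exact ⟨s, rfl⟩

lemma mem_factorSet_iff {j : ℕ} {w : Fin j → Fin 2} :
    w ∈ factorSet j ↔ ∃ s, fibFactor s j = w := by
  rw [factorSet, Set.Finite.mem_toFinset]
  exact Iff.rfl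

/-- restriction of a (j+1)-window to its first j letters -/
def restrictW (j : ℕ) (w : Fin (j+1) → Fin 2) : Fin j → Fin 2 := fun t => w t.castSucc

lemma restrictW_factor (j s : ℕ) : restrictW j (fibFactor s (j+1)) = fibFactor s j := rfl

lemma factorSet_image (j : ℕ) : (factorSet (j+1)).image (restrictW j) = factorSet j := by
  ext w
  rw [Finset.mem_image, mem_factorSet_iff]
  constructor
  · rintro ⟨w', hw', rfl⟩
    obtain ⟨s, rfl⟩ := mem_factorSet_iff.mp hw'
    exact ⟨s, (restrictW_factor j s).symm⟩
  · rintro ⟨s, rfl⟩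
    exact ⟨fibFactor s (j+1), mem_factorSet _, restrictW_factor j s⟩

lemma factorSet_card_mono (j : ℕ) : (factorSet j).card ≤ (factorSet (j+1)).card := by
  rw [← factorSet_image j]
  exact Finset.card_image_le

lemma fibInf_zero : fibInf 0 = 1 := by decide
lemma fibInf_one : fibInf 1 = 0 := by decide

lemma factorSet_one : 2 ≤ (factorSet 1).card := by
  apply Finset.one_lt_card.mpr
  refine ⟨fibFactor 0 1, mem_factorSet 0, fibFactor 1 1, mem_factorSet 1, ?_⟩
  intro h
  have := congrFun h ⟨0, by omega⟩
  rw [fibFactor, fibFactor] at this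
  simp only at this
  rw [show (0:ℕ) + 0 = 0 by omega, show (1:ℕ) + 0 = 1 by omega, fibInf_zero, fibInf_one] at this
  exact absurd this (by decide)

/-- if two of the z-words coincide then the Fibonacci word is eventually periodic: false -/
lemma zword_injective (n k : ℕ) (hn : 2 ≤ n) (hk1 : F n ≤ k) (hk2 : k < F (n + 1)) :
    ∀ j ≤ k, ∀ j' ≤ k, zword n k j = zword n k j' → j = j' := by
  have hFn : 2 ≤ F n := le_trans (by decide : 2 ≤ F 2) (F_mono hn)
  intro j hj j' hj' hzz
  by_contra hne
  -- all length-k windows lie in a set of at most k elements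
  set T : Finset (Fin k → Fin 2) := ((Finset.range (k+1)).erase j').image (zword n k) with hT
  have hTcard : T.card ≤ k := by
    calc T.card ≤ ((Finset.range (k+1)).erase j').card := Finset.card_image_le
    _ ≤ (k + 1) - 1 := by
        rw [Finset.card_erase_of_mem (by simp; omega), Finset.card_range]
    _ = k := by omega
  have hsubT : factorSet k ⊆ T := by
    intro w hw
    obtain ⟨s, rfl⟩ := mem_factorSet_iff.mp hw
    obtain ⟨j'', hj'', _, heq⟩ := window_rep n k hn hk1 hk2 s
    rcases eq_or_ne j'' j' with rfl | hne'
    · rw [hT, Finset.mem_image]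
      exact ⟨j, Finset.mem_erase.mpr ⟨hne, by simp; omega⟩, by rw [hzz, heq]⟩
    · rw [hT, Finset.mem_image]
      exact ⟨j'', Finset.mem_erase.mpr ⟨hne', by simp; omega⟩, heq.symm⟩
  have hck : (factorSet k).card ≤ k := le_trans (Finset.card_le_card hsubT) hTcard
  -- find a level where the complexity does not grow
  have hchain : ∃ j0, 1 ≤ j0 ∧ j0 + 1 ≤ k ∧ (factorSet (j0+1)).card ≤ (factorSet j0).card := by
    by_contra hc
    push_neg at hc
    have haux : ∀ t, t + 1 ≤ k → t + 2 ≤ (factorSet (t+1)).card := by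
      intro t
      induction t with
      | zero => intro _; exact factorSet_one
      | succ u ihu =>
        intro hu
        have h1 := ihu (by omega)
        have h2 := hc (u+1) (by omega) (by omega)
        omega
    have := haux (k-1) (by omega)
    rw [show k - 1 + 1 = k by omega] at this
    omega
  obtain ⟨j0, hj01, hj0k, hj0c⟩ := hchain
  -- restriction is injective on (j0+1)-windows
  have hinj : Set.InjOn (restrictW j0) ↑(factorSet (j0+1)) := by
    apply Finset.card_image_iff.mp
    rw [factorSet_image j0]
    exact le_antisymm (factorSet_card_mono j0) hj0c
  have hstep : ∀ s t, fibFactor s j0 = fibFactor t j0 →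
      fibFactor (s+1) j0 = fibFactor (t+1) j0 := by
    intro s t h
    have h2 : fibFactor s (j0+1) = fibFactor t (j0+1) := by
      apply hinj (Finset.mem_coe.mpr (mem_factorSet s)) (Finset.mem_coe.mpr (mem_factorSet t))
      rw [restrictW_factor, restrictW_factor, h]
    funext t'
    have e1 : fibFactor (s+1) j0 t' = fibFactor s (j0+1) ⟨t'.val+1, by omega⟩ := by
      show fibInf (s + 1 + t'.val) = fibInf (s + (t'.val+1)); congr 1; omega
    have e2 : fibFactor (t+1) j0 t' = fibFactor t (j0+1) ⟨t'.val+1, by omega⟩ := by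
      show fibInf (t + 1 + t'.val) = fibInf (t + (t'.val+1)); congr 1; omega
    rw [e1, e2, h2]
  have main : ∀ s t : ℕ, s < t → fibFactor s j0 = fibFactor t j0 → False := by
    intro s t hst h
    have hAll : ∀ i, fibFactor (s+i) j0 = fibFactor (t+i) j0 := by
      intro i; induction i with
      | zero => simpa using h
      | succ u ihu =>
        have := hstep (s+u) (t+u) ihu
        rwa [show s+u+1 = s+(u+1) by omega, show t+u+1 = t+(u+1) by omega] at this
    apply fib_aperiodic s (t - s) (by omega)
    intro i hi
    have hy : 0 < j0 := by omega
    have hcf := congrFun (hAll (i - s)) (⟨0, hy⟩ : Fin j0)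
    simp only [fibFactor, Fin.val_mk] at hcf
    rw [show s + (i-s) + 0 = i by omega, show t + (i-s) + 0 = i + (t-s) by omega] at hcf
    exact hcf.symm
  obtain ⟨s, t, hnest, heqw⟩ := Finite.exists_ne_map_eq_of_infinite (fun s => fibFactor s j0)
  rcases Nat.lt_or_gt_of_ne hnest with h | h
  · exact main s t h heqw
  · exact main t s h heqw.symm

end chunk5

end aux

/-- for n ≥ 2 and F(n) ≤ k < F(n+1), the words z_0, …, z_k are pairwise
distinct, every length-k factor of f_∞ is one of them, and their first occurrences in f_∞
appear in strictly increasing order of j. -/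
theorem stmt18 (n k : ℕ) (hn : 2 ≤ n) (hk1 : F n ≤ k) (hk2 : k < F (n + 1)) :
    (∀ j ≤ k, ∀ j' ≤ k, j ≠ j' → zword n k j ≠ zword n k j') ∧
    (∀ s : ℕ, ∃ j ≤ k, fibFactor s k = zword n k j) ∧
    (∀ j j' : ℕ, j < j' → j' ≤ k →
      sInf {s : ℕ | fibFactor s k = zword n k j}
        < sInf {s : ℕ | fibFactor s k = zword n k j'}) := by
  have hinj := zword_injective n k hn hk1 hk2
  refine ⟨?_, ?_, ?_⟩
  · intro j hj j' hj' hne hz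
    exact hne (hinj j hj j' hj' hz)
  · intro s
    obtain ⟨j, hj, _, heq⟩ := window_rep n k hn hk1 hk2 s
    exact ⟨j, hj, heq⟩
  · intro j j' hjj hj'k
    have hjk : j ≤ k := by omega
    have key : ∀ i, i ≤ k → sInf {s | fibFactor s k = zword n k i} = zpos n k i := by
      intro i hi
      have hmem : zpos n k i ∈ {s | fibFactor s k = zword n k i} :=
        (zword_eq_factor n k i).symm
      apply le_antisymm (Nat.sInf_le hmem)
      have hmem' := Nat.sInf_mem (⟨_, hmem⟩ : Set.Nonempty {s | fibFactor s k = zword n k i})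
      obtain ⟨j'', hj''k, hle, heq⟩ := window_rep n k hn hk1 hk2
        (sInf {s | fibFactor s k = zword n k i})
      have hii : j'' = i := hinj j'' hj''k i hi (heq.symm.trans hmem')
      exact hii ▸ hle
    rw [key j hjk, key j' hj'k]
    exact zpos_strictMono hk1 hk2 hjj hj'k
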